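/- arXiv:1408.4359 — 5 statements merged into one kernel-verified Lean document; each statement's English description precedes it below -/
import Mathlib

section
/- For every M > 0 and r > 0 there exists δ > 0 such that for every unital C*-algebra A and all elements a, b ∈ A with ‖a‖ ≤ M, ‖b‖ ≤ M, and ‖ab − ba‖ < δ, one has ‖e^{a+b} e^{−a} e^{−b} − 1‖ < r. -/
open NormedSpace
open scoped Nat

section Aux

variable {A : Type*} [NormedRing A] [NormedAlgebra ℝ A] [CompleteSpace A]

lemma pow_comm_norm (x c : A) (n : ℕ) :
    ‖x ^ (n+1) * c - c * x ^ (n+1)‖ ≤ (n+1) * ‖x‖ ^ n * ‖x * c - c * x‖ := by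
  induction n with
  | zero => simp
  | succ n ih =>
    have key : x ^ (n+2) * c - c * x ^ (n+2)
        = x * (x ^ (n+1) * c - c * x ^ (n+1)) + (x * c - c * x) * x ^ (n+1) := by
      have h1 : x ^ (n+2) = x * x ^ (n+1) := pow_succ' x (n+1)
      rw [h1]; noncomm_ring
    calc ‖x ^ (n+2) * c - c * x ^ (n+2)‖
        ≤ ‖x * (x ^ (n+1) * c - c * x ^ (n+1))‖ + ‖(x * c - c * x) * x ^ (n+1)‖ := by
          rw [key]; exact norm_add_le _ _
      _ ≤ ‖x‖ * ((n+1) * ‖x‖ ^ n * ‖x * c - c * x‖) + ‖x * c - c * x‖ * ‖x‖ ^ (n+1) := by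
          gcongr
          · exact (norm_mul_le _ _).trans (by gcongr)
          · exact (norm_mul_le _ _).trans (by gcongr; exact norm_pow_le' x n.succ_pos)
      _ ≤ (↑(n+1)+1) * ‖x‖ ^ (n+1) * ‖x * c - c * x‖ := by
          rw [pow_succ]; push_cast; nlinarith [norm_nonneg (x*c - c*x), norm_nonneg x,
            pow_nonneg (norm_nonneg x) n, pow_nonneg (norm_nonneg x) (n+1)]

lemma exp_comm_norm (x c : A) :
    ‖exp x * c - c * exp x‖ ≤ Real.exp ‖x‖ * ‖x * c - c * x‖ := by
  have hsum : Summable fun n : ℕ => (n !⁻¹ : ℝ) • x ^ n := expSeries_summable' (𝕂 := ℝ) x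
  have h1 : exp x * c = ∑' n : ℕ, (n !⁻¹ : ℝ) • (x ^ n * c) := by
    rw [exp_eq_tsum (𝕂 := ℝ), ← hsum.tsum_mul_right c]
    simp_rw [smul_mul_assoc]
  have h2 : c * exp x = ∑' n : ℕ, (n !⁻¹ : ℝ) • (c * x ^ n) := by
    rw [exp_eq_tsum (𝕂 := ℝ), ← hsum.tsum_mul_left c]
    simp_rw [mul_smul_comm]
  have hs1 : Summable fun n : ℕ => (n !⁻¹ : ℝ) • (x ^ n * c) := by
    refine Summable.of_norm (Summable.of_nonneg_of_le (fun n => norm_nonneg _) (fun n => ?_)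
      ((norm_expSeries_summable' (𝕂 := ℝ) x).mul_right ‖c‖))
    rw [norm_smul, norm_smul, mul_assoc]
    gcongr
    exact norm_mul_le _ _
  have hs2 : Summable fun n : ℕ => (n !⁻¹ : ℝ) • (c * x ^ n) := by
    refine Summable.of_norm (Summable.of_nonneg_of_le (fun n => norm_nonneg _) (fun n => ?_)
      ((norm_expSeries_summable' (𝕂 := ℝ) x).mul_left ‖c‖))
    rw [norm_smul, norm_smul]
    calc ‖(n !⁻¹ : ℝ)‖ * ‖c * x ^ n‖ ≤ ‖(n !⁻¹ : ℝ)‖ * (‖c‖ * ‖x ^ n‖) := by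
          gcongr; exact norm_mul_le _ _
      _ = ‖c‖ * (‖(n !⁻¹ : ℝ)‖ * ‖x ^ n‖) := by ring
  have hdiff : exp x * c - c * exp x
      = ∑' n : ℕ, (n !⁻¹ : ℝ) • (x ^ n * c - c * x ^ n) := by
    rw [h1, h2, ← hs1.tsum_sub hs2]
    simp_rw [smul_sub]
  -- bound series
  set g : ℕ → ℝ := fun n => (n ! : ℝ)⁻¹ * (n * ‖x‖ ^ (n - 1)) * ‖x * c - c * x‖ with hg
  have hgsucc : ∀ n : ℕ, g (n + 1) = (n ! : ℝ)⁻¹ * ‖x‖ ^ n * ‖x * c - c * x‖ := by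
    intro n
    simp only [hg, Nat.add_sub_cancel, Nat.factorial_succ, Nat.cast_mul]
    rw [mul_inv]
    push_cast
    have : ((n:ℝ) + 1) ≠ 0 := by positivity
    field_simp
  have hgs : Summable g := by
    rw [← summable_nat_add_iff 1]
    simp_rw [hgsucc]
    exact ((Real.summable_pow_div_factorial ‖x‖).congr (by
      intro n; rw [div_eq_inv_mul])).mul_right _
  have hterm : ∀ n : ℕ, ‖(n !⁻¹ : ℝ) • (x ^ n * c - c * x ^ n)‖ ≤ g n := by
    intro n
    rw [norm_smul]
    cases n with
    | zero => simp [hg]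
    | succ n =>
      have := pow_comm_norm x c n
      rw [hg]
      simp only [Nat.add_sub_cancel]
      have h0 : ‖((n+1)!⁻¹ : ℝ)‖ = (((n+1)! : ℕ) : ℝ)⁻¹ := by
        rw [Real.norm_eq_abs, abs_of_nonneg (by positivity)]
      rw [h0]
      have hpos : (0:ℝ) ≤ (((n+1)! : ℕ) : ℝ)⁻¹ := by positivity
      calc (((n+1)! : ℕ) : ℝ)⁻¹ * ‖x ^ (n+1) * c - c * x ^ (n+1)‖
          ≤ (((n+1)! : ℕ) : ℝ)⁻¹ * ((n+1) * ‖x‖ ^ n * ‖x * c - c * x‖) := mul_le_mul_of_nonneg_left (by exact_mod_cast this) hpos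
        _ = (((n+1)! : ℕ) : ℝ)⁻¹ * (↑(n+1) * ‖x‖ ^ n) * ‖x * c - c * x‖ := by push_cast; ring
  have hsn : Summable fun n : ℕ => ‖(n !⁻¹ : ℝ) • (x ^ n * c - c * x ^ n)‖ :=
    Summable.of_nonneg_of_le (fun n => norm_nonneg _) hterm hgs
  have hgval : ∑' n, g n ≤ Real.exp ‖x‖ * ‖x * c - c * x‖ := by
    rw [hgs.tsum_eq_zero_add]
    have hg0 : g 0 = 0 := by simp [hg]
    rw [hg0, zero_add]
    simp_rw [hgsucc]
    rw [tsum_mul_right]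
    have : ∑' n : ℕ, (n ! : ℝ)⁻¹ * ‖x‖ ^ n = Real.exp ‖x‖ := by
      rw [Real.exp_eq_exp_ℝ, exp_eq_tsum (𝕂 := ℝ)]
      simp [smul_eq_mul]
    rw [this]
  calc ‖exp x * c - c * exp x‖ ≤ ∑' n, ‖(n !⁻¹ : ℝ) • (x ^ n * c - c * x ^ n)‖ := by
        rw [hdiff]; exact norm_tsum_le_tsum_norm hsn
    _ ≤ ∑' n, g n := Summable.tsum_le_tsum hterm hsn hgs
    _ ≤ Real.exp ‖x‖ * ‖x * c - c * x‖ := hgval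

lemma norm_exp_le_exp [NormOneClass A] (x : A) : ‖exp x‖ ≤ Real.exp ‖x‖ := by
  rw [exp_eq_tsum (𝕂 := ℝ)]
  refine (norm_tsum_le_tsum_norm (norm_expSeries_summable' (𝕂 := ℝ) x)).trans ?_
  rw [Real.exp_eq_exp_ℝ, exp_eq_tsum (𝕂 := ℝ)]
  refine Summable.tsum_le_tsum (fun n => ?_) (norm_expSeries_summable' (𝕂 := ℝ) x)
    (expSeries_summable' (𝕂 := ℝ) ‖x‖)
  rw [norm_smul, smul_eq_mul, Real.norm_eq_abs, abs_of_nonneg (by positivity)]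
  gcongr
  exact norm_pow_le x n

end Aux

universe u

/-- If `a`, `b` are bounded in norm and almost commute, then
`e^{a+b} e^{-a} e^{-b}` is close to `1`, uniformly over all unital C*-algebras. -/
theorem stmt_2 (M r : ℝ) (hM : 0 < M) (hr : 0 < r) :
    ∃ δ : ℝ, 0 < δ ∧
      ∀ (A : Type u) [NormedRing A] [StarRing A] [CStarRing A] [CompleteSpace A]
        [NormedAlgebra ℂ A] [StarModule ℂ A],
        ∀ a b : A, ‖a‖ ≤ M → ‖b‖ ≤ M → ‖a * b - b * a‖ < δ →
          ‖NormedSpace.exp (a + b) * NormedSpace.exp (-a) * NormedSpace.exp (-b) - 1‖ < r := by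
  refine ⟨r / Real.exp (4 * M), by positivity, ?_⟩
  intro A _ _ _ _ _ _ a b ha hb hc
  rcases subsingleton_or_nontrivial A with hA | hA
  · rw [Subsingleton.elim
      (NormedSpace.exp (a + b) * NormedSpace.exp (-a) * NormedSpace.exp (-b) - 1) (0 : A)]
    simpa using hr
  · set c := a * b - b * a with hcdef
    set C := Real.exp (4 * M) * ‖c‖ with hC
    set f : ℝ → A := fun t =>
      exp (t • (a + b)) * exp (t • (-a)) * exp (t • (-b)) with hf
    set f' : ℝ → A := fun t =>
      exp (t • (a + b)) * (b * exp (t • (-a)) - exp (t • (-a)) * b) * exp (t • (-b))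
      with hf'
    have hderiv : ∀ t : ℝ, HasDerivAt f (f' t) t := by
      intro t
      have h := ((hasDerivAt_exp_smul_const (𝕂 := ℝ) (a + b) t).mul
        (hasDerivAt_exp_smul_const' (𝕂 := ℝ) (-a) t)).mul
        (hasDerivAt_exp_smul_const' (𝕂 := ℝ) (-b) t)
      refine h.congr_deriv ?_
      show _ = exp (t • (a + b)) * (b * exp (t • -a) - exp (t • -a) * b) * exp (t • -b)
      simp only [Pi.mul_apply]
      noncomm_ring
    -- bound on the derivative on [0,1]
    have hbound : ∀ t ∈ Set.Icc (0:ℝ) 1, ‖f' t‖ ≤ C := by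
      intro t ht
      obtain ⟨ht0, ht1⟩ := ht
      have htabs : |t| ≤ 1 := abs_le.mpr ⟨by linarith, ht1⟩
      have hEnorm : ‖exp (t • (a + b))‖ ≤ Real.exp (2 * M) := by
        refine (norm_exp_le_exp _).trans (Real.exp_le_exp.mpr ?_)
        rw [norm_smul, Real.norm_eq_abs]
        have h := norm_add_le a b
        nlinarith [abs_nonneg t, norm_nonneg (a + b)]
      have hBnorm : ‖exp (t • (-b))‖ ≤ Real.exp M := by
        refine (norm_exp_le_exp _).trans (Real.exp_le_exp.mpr ?_)
        rw [norm_smul, Real.norm_eq_abs, norm_neg]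
        nlinarith [abs_nonneg t, norm_nonneg b]
      have hcomm : ‖b * exp (t • (-a)) - exp (t • (-a)) * b‖ ≤ Real.exp M * ‖c‖ := by
        rw [norm_sub_rev]
        refine (exp_comm_norm (t • (-a)) b).trans ?_
        have h1 : Real.exp ‖t • (-a)‖ ≤ Real.exp M := by
          refine Real.exp_le_exp.mpr ?_
          rw [norm_smul, Real.norm_eq_abs, norm_neg]
          nlinarith [abs_nonneg t, norm_nonneg a]
        have h2 : ‖t • (-a) * b - b * (t • (-a))‖ ≤ ‖c‖ := by
          have he : t • (-a) * b - b * (t • (-a)) = t • (-(a * b - b * a)) := by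
            rw [smul_mul_assoc, mul_smul_comm, ← smul_sub]
            congr 1
            noncomm_ring
          rw [he, norm_smul, Real.norm_eq_abs, norm_neg, ← hcdef]
          nlinarith [abs_nonneg t, norm_nonneg c]
        exact mul_le_mul h1 h2 (norm_nonneg _) (Real.exp_pos M).le
      have step1 : ‖f' t‖ ≤ ‖exp (t • (a + b)) * (b * exp (t • (-a)) - exp (t • (-a)) * b)‖
          * ‖exp (t • (-b))‖ := norm_mul_le _ _
      have step2 : ‖exp (t • (a + b)) * (b * exp (t • (-a)) - exp (t • (-a)) * b)‖
          ≤ Real.exp (2 * M) * (Real.exp M * ‖c‖) :=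
        (norm_mul_le _ _).trans (mul_le_mul hEnorm hcomm (norm_nonneg _) (Real.exp_pos _).le)
      have step3 : ‖f' t‖ ≤ (Real.exp (2 * M) * (Real.exp M * ‖c‖)) * Real.exp M :=
        step1.trans (mul_le_mul step2 hBnorm (norm_nonneg _)
          (by positivity))
      refine step3.trans (le_of_eq ?_)
      rw [hC, show (4:ℝ) * M = 2 * M + M + M by ring, Real.exp_add, Real.exp_add]
      ring
    have hmv : ‖f 1 - f 0‖ ≤ C * ‖(1:ℝ) - 0‖ :=
      (convex_Icc (0:ℝ) 1).norm_image_sub_le_of_norm_hasDerivWithin_le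
        (fun x hx => (hderiv x).hasDerivWithinAt) hbound
        (Set.left_mem_Icc.mpr zero_le_one) (Set.right_mem_Icc.mpr zero_le_one)
    have hf0 : f 0 = 1 := by simp [hf, NormedSpace.exp_zero]
    have hf1 : f 1 = exp (a + b) * exp (-a) * exp (-b) := by simp [hf]
    rw [hf0, hf1] at hmv
    calc ‖exp (a + b) * exp (-a) * exp (-b) - 1‖ ≤ C * ‖(1:ℝ) - 0‖ := hmv
      _ = C := by simp
      _ < Real.exp (4 * M) * (r / Real.exp (4 * M)) := by
          rw [hC]
          exact mul_lt_mul_of_pos_left hc (Real.exp_pos _)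
      _ = r := by field_simp
end

section
/- Let n ≥ 1 and let h ∈ Mₙ(ℂ) be a selfadjoint matrix with trace 0. Then there exist x₁, x₂ ∈ Mₙ(ℂ) such that: x₁² = x₂² = 0; ‖x₁‖ ≤ ‖h‖^{1/2} and ‖x₂‖ ≤ ‖h‖^{1/2} (operator norms); the selfadjoint matrices h₁ := x₁*x₁ − x₁x₁* and h₂ := x₂*x₂ − x₂x₂* commute; and h = h₁ + h₂. -/
open scoped Matrix.Norms.L2Operator

namespace Stmt7Aux
open Matrix

lemma list_sum_nonpos : ∀ l : List ℝ, (∀ x ∈ l, x ≤ 0) → l.sum ≤ 0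
  | [], _ => le_of_eq List.sum_nil
  | a :: t, h => by
    rw [List.sum_cons]
    have h1 := h a (List.mem_cons_self)
    have h2 := list_sum_nonpos t (fun x hx => h x (List.mem_cons_of_mem a hx))
    linarith

lemma greedy {α : Type*} [DecidableEq α] (f : α → ℝ) (M : ℝ) :
    ∀ (N : ℕ) (l : List α), l.length = N → (∀ x ∈ l, |f x| ≤ M) →
    ∀ s : ℝ, |s| ≤ M → s + (l.map f).sum = 0 →
    ∃ l' : List α, l'.Perm l ∧ ∀ m, |s + ((l'.map f).take m).sum| ≤ M := by
  intro N
  induction N with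
  | zero =>
    intro l hl _ s hs _
    refine ⟨l, List.Perm.refl l, fun m => ?_⟩
    rw [List.length_eq_zero_iff] at hl
    subst hl
    simpa using hs
  | succ N ih =>
    intro l hl hb s hs hsum
    have hne : l ≠ [] := by
      intro hnil; subst hnil; simp at hl
    -- pick an element x with sign opposite to s
    have hexists : ∃ x ∈ l, |s + f x| ≤ M := by
      rcases le_or_gt s 0 with hs0 | hs0
      · -- find a nonnegative element
        by_contra hcon
        push_neg at hcon
        have hall : ∀ x ∈ l, f x < 0 := by
          intro x hx
          by_contra hge
          push_neg at hge
          have : |s + f x| ≤ M := by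
            rw [abs_le]
            constructor
            · have := (abs_le.mp hs).1
              linarith
            · have := (abs_le.mp (hb x hx)).2
              linarith
          exact absurd this (by simpa using (hcon x hx))
        have hneg : (l.map f).sum < 0 := by
          rcases List.exists_cons_of_ne_nil hne with ⟨a, t, rfl⟩
          simp only [List.map_cons, List.sum_cons]
          have h1 : f a < 0 := hall a (List.mem_cons_self)
          have h2 : (t.map f).sum ≤ 0 :=
            list_sum_nonpos _ (by
              intro x hx
              rcases List.mem_map.mp hx with ⟨y, hy, rfl⟩
              exact le_of_lt (hall y (List.mem_cons_of_mem a hy)))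
          linarith
        linarith
      · -- find a nonpositive element
        by_contra hcon
        push_neg at hcon
        have hall : ∀ x ∈ l, 0 < f x := by
          intro x hx
          by_contra hge
          push_neg at hge
          have : |s + f x| ≤ M := by
            rw [abs_le]
            constructor
            · have := (abs_le.mp (hb x hx)).1
              linarith
            · have := (abs_le.mp hs).2
              linarith
          exact absurd this (by simpa using (hcon x hx))
        have hpos : 0 < (l.map f).sum := by
          rcases List.exists_cons_of_ne_nil hne with ⟨a, t, rfl⟩
          simp only [List.map_cons, List.sum_cons]
          have h1 : 0 < f a := hall a (List.mem_cons_self)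
          have h2 : 0 ≤ (t.map f).sum :=
            List.sum_nonneg (by
              intro x hx
              rcases List.mem_map.mp hx with ⟨y, hy, rfl⟩
              exact le_of_lt (hall y (List.mem_cons_of_mem a hy)))
          linarith
        linarith
    rcases hexists with ⟨x, hxl, hxb⟩
    have hperm : (x :: l.erase x).Perm l := (List.perm_cons_erase hxl).symm
    have hlen : (l.erase x).length = N := by
      have := List.length_erase_of_mem hxl
      omega
    have hb' : ∀ y ∈ l.erase x, |f y| ≤ M := fun y hy => hb y (List.mem_of_mem_erase hy)
    have hsum' : (s + f x) + ((l.erase x).map f).sum = 0 := by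
      have := hperm.map f |>.sum_eq
      simp only [List.map_cons, List.sum_cons] at this
      linarith [hsum, this]
    rcases ih (l.erase x) hlen hb' (s + f x) hxb hsum' with ⟨l'', hl''p, hl''⟩
    refine ⟨x :: l'', (hl''p.cons x).trans hperm, fun m => ?_⟩
    cases m with
    | zero => simpa using hs
    | succ m =>
      simp only [List.map_cons, List.take_succ_cons, List.sum_cons]
      have := hl'' m
      calc |s + (f x + ((l''.map f).take m).sum)|
          = |s + f x + ((l''.map f).take m).sum| := by ring_nf
        _ ≤ M := this

lemma exists_perm_partial_sums (n : ℕ) (d : Fin n → ℝ) (M : ℝ) (hM : 0 ≤ M)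
    (hb : ∀ i, |d i| ≤ M) (hsum : ∑ i, d i = 0) :
    ∃ σ : Equiv.Perm (Fin n), ∀ m : ℕ,
      |∑ k ∈ Finset.range m, (fun k => if hk : k < n then d (σ ⟨k, hk⟩) else 0) k| ≤ M := by
  have h0 : (0 : ℝ) + ((List.finRange n).map d).sum = 0 := by
    rw [zero_add, ← Fin.sum_univ_def]
    exact hsum
  rcases greedy d M n (List.finRange n) List.length_finRange
      (fun x _ => hb x) 0 (by simpa using hM) h0 with ⟨l', hperm, hps⟩
  have hnd : l'.Nodup := hperm.nodup_iff.mpr (List.nodup_finRange n)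
  have hmem : ∀ x : Fin n, x ∈ l' := fun x => hperm.mem_iff.mpr (List.mem_finRange x)
  have hlen : l'.length = n := by
    rw [hperm.length_eq, List.length_finRange]
  let σ0 : Fin l'.length ≃ Fin n := hnd.getEquivOfForallMemList l' hmem
  refine ⟨(finCongr hlen.symm).trans σ0, fun m => ?_⟩
  have key : ∀ m : ℕ, ∑ k ∈ Finset.range m,
      (fun k => if hk : k < n then d (((finCongr hlen.symm).trans σ0) ⟨k, hk⟩) else 0) k
      = ((l'.map d).take m).sum := by
    intro m
    induction m with
    | zero => simp
    | succ m ih =>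
      rw [Finset.sum_range_succ, ih]
      by_cases hm : m < n
      · have hm' : m < (l'.map d).length := by
          rw [List.length_map, hlen]; exact hm
        rw [List.sum_take_succ _ _ hm']
        congr 1
        simp only [hm, dif_pos]
        have : ((finCongr hlen.symm).trans σ0) ⟨m, hm⟩ = l'.get ⟨m, by omega⟩ := rfl
        rw [this]
        simp [List.getElem_map]
      · have hm' : (l'.map d).length ≤ m := by
          rw [List.length_map, hlen]; omega
        rw [List.take_of_length_le hm', List.take_of_length_le (by omega : (l'.map d).length ≤ m + 1)]
        simp [hm]
  rw [key m]
  simpa using hps m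

lemma diag_norm_le {n : ℕ} (w : Fin n → ℂ) {C : ℝ} (hC : 0 ≤ C) (hw : ∀ i, ‖w i‖ ≤ C) :
    ‖Matrix.diagonal w‖ ≤ C := by
  rw [Matrix.l2_opNorm_def]
  refine ContinuousLinearMap.opNorm_le_bound _ hC fun x => ?_
  simp only [LinearEquiv.trans_apply, LinearMap.coe_toContinuousLinearMap',
    Matrix.toEuclideanLin_apply]
  rw [EuclideanSpace.norm_eq, EuclideanSpace.norm_eq]
  have hxn : ∀ i, ‖(WithLp.equiv 2 (Fin n → ℂ)).symm
      (Matrix.diagonal w *ᵥ (WithLp.equiv 2 (Fin n → ℂ)) x) i‖ = ‖w i * x i‖ := by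
    intro i
    simp [Matrix.mulVec_diagonal]
  calc Real.sqrt (∑ i, ‖(WithLp.equiv 2 (Fin n → ℂ)).symm
          (Matrix.diagonal w *ᵥ (WithLp.equiv 2 (Fin n → ℂ)) x) i‖ ^ 2)
      = Real.sqrt (∑ i, ‖w i * x i‖ ^ 2) := by
        congr 1; exact Finset.sum_congr rfl fun i _ => by rw [hxn i]
    _ ≤ Real.sqrt (∑ i, C ^ 2 * ‖x i‖ ^ 2) := by
        apply Real.sqrt_le_sqrt
        apply Finset.sum_le_sum
        intro i _
        rw [norm_mul, mul_pow]
        have h1 : ‖w i‖ ^ 2 ≤ C ^ 2 := by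
          apply sq_le_sq' <;> nlinarith [norm_nonneg (w i), hw i]
        nlinarith [sq_nonneg ‖x i‖, norm_nonneg (x i)]
    _ = C * Real.sqrt (∑ i, ‖x i‖ ^ 2) := by
        rw [← Finset.mul_sum, Real.sqrt_mul (by positivity), Real.sqrt_sq hC]

lemma max_sub_max_neg (a : ℝ) : ((max a 0 : ℝ) : ℂ) - ((max (-a) 0 : ℝ) : ℂ) = (a : ℂ) := by
  rcases le_total a 0 with h | h
  · rw [max_eq_right h, max_eq_left (by linarith)]
    push_cast; ring
  · rw [max_eq_left h, max_eq_right (by linarith)]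
    push_cast; ring

lemma pair_matrix {n : ℕ} (p : Fin n → Fin n) (hp : ∀ i, p (p i) = i)
    (v : Fin n → ℝ) (hv : ∀ i, v (p i) = -v i) {M : ℝ} (hM : 0 ≤ M) (hb : ∀ i, |v i| ≤ M) :
    ∃ x : Matrix (Fin n) (Fin n) ℂ, x * x = 0 ∧ ‖x‖ ≤ Real.sqrt M ∧
      star x * x - x * star x = Matrix.diagonal (fun i => (v i : ℂ)) := by
  classical
  set x : Matrix (Fin n) (Fin n) ℂ :=
    Matrix.of fun i j => if p i = j ∧ 0 < v j then ((Real.sqrt (v j) : ℝ) : ℂ) else 0 with hxdef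
  have hxapp : ∀ i j, x i j = if p i = j ∧ 0 < v j then ((Real.sqrt (v j) : ℝ) : ℂ) else 0 :=
    fun i j => rfl
  have hstar : ∀ i j, (star x) i j = (starRingEnd ℂ) (x j i) := fun i j => rfl
  -- x * x = 0
  have hxx : x * x = 0 := by
    ext i j
    rw [Matrix.mul_apply]
    refine Finset.sum_eq_zero fun k _ => ?_
    by_cases h1 : p i = k ∧ 0 < v k
    · have hk : x k j = 0 := by
        rw [hxapp, if_neg]
        rintro ⟨h2, h3⟩
        have h4 : v j = -v k := by rw [← h2, hv k]
        rw [h4] at h3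
        linarith [h1.2]
      rw [hk, mul_zero]
    · have : x i k = 0 := by rw [hxapp, if_neg h1]
      rw [this, zero_mul]
  -- star x * x
  have hsxx : star x * x = Matrix.diagonal (fun i => ((max (v i) 0 : ℝ) : ℂ)) := by
    ext i j
    rw [Matrix.mul_apply]
    rw [Finset.sum_eq_single (p i)]
    · rw [hstar]
      simp only [hxapp, hp i]
      by_cases hij : i = j
      · subst hij
        rw [Matrix.diagonal_apply_eq]
        by_cases hvi : 0 < v i
        · simp [hvi, Complex.conj_ofReal, ← Complex.ofReal_mul,
            Real.mul_self_sqrt (le_of_lt hvi), max_eq_left (le_of_lt hvi)]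
        · simp [hvi, max_eq_right (le_of_not_gt hvi)]
      · have hneg : ¬(i = j ∧ 0 < v j) := fun hc => hij hc.1
        rw [Matrix.diagonal_apply_ne _ hij, if_neg hneg, mul_zero]
    · intro k _ hk
      have : x k i = 0 := by
        rw [hxapp, if_neg]
        rintro ⟨h2, _⟩
        exact hk (by rw [← h2, hp])
      rw [hstar, this, map_zero, zero_mul]
    · exact fun habs => absurd (Finset.mem_univ (p i)) habs
  -- x * star x
  have hxsx : x * star x = Matrix.diagonal (fun i => ((max (-v i) 0 : ℝ) : ℂ)) := by
    ext i j
    rw [Matrix.mul_apply]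
    rw [Finset.sum_eq_single (p i)]
    · rw [hstar]
      simp only [hxapp]
      by_cases hij : i = j
      · subst hij
        rw [Matrix.diagonal_apply_eq]
        rw [← hv i]
        by_cases hvi : 0 < v (p i)
        · simp [hvi, Complex.conj_ofReal, ← Complex.ofReal_mul,
            Real.mul_self_sqrt (le_of_lt hvi), max_eq_left (le_of_lt hvi)]
        · simp [hvi, max_eq_right (le_of_not_gt hvi)]
      · have hneg : ¬(p j = p i ∧ 0 < v (p i)) := by
          rintro ⟨h2, _⟩
          exact hij (by rw [← hp i, ← h2, hp])
        rw [Matrix.diagonal_apply_ne _ hij, if_neg hneg, map_zero, mul_zero]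
    · intro k _ hk
      have : x i k = 0 := by
        rw [hxapp, if_neg]
        rintro ⟨h2, _⟩
        exact hk h2.symm
      rw [this, zero_mul]
    · exact fun habs => absurd (Finset.mem_univ (p i)) habs
  -- norm bound
  have hnorm : ‖x‖ ≤ Real.sqrt M := by
    have hsq : ‖x‖ * ‖x‖ = ‖star x * x‖ := (CStarRing.norm_star_mul_self).symm
    have hd : ‖star x * x‖ ≤ M := by
      rw [hsxx]
      refine diag_norm_le _ hM fun i => ?_
      rw [Complex.norm_real, Real.norm_eq_abs, abs_of_nonneg (le_max_right _ _)]
      exact max_le (le_trans (le_abs_self _) (hb i)) hM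
    have h1 : ‖x‖ ^ 2 ≤ M := by rw [sq, hsq]; exact hd
    calc ‖x‖ = Real.sqrt (‖x‖ ^ 2) := (Real.sqrt_sq (norm_nonneg x)).symm
      _ ≤ Real.sqrt M := Real.sqrt_le_sqrt h1
  refine ⟨x, hxx, hnorm, ?_⟩
  rw [hsxx, hxsx, Matrix.diagonal_sub]
  have hfun : (fun i => ((max (v i) 0 : ℝ) : ℂ) - ((max (-v i) 0 : ℝ) : ℂ))
      = fun i => ((v i : ℂ)) := funext fun i => max_sub_max_neg (v i)
  rw [hfun]

end Stmt7Aux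

open Stmt7Aux in
/-- Lemma 3.1 (matrix case): a trace-zero selfadjoint matrix is a sum of two commuting
self-commutators `[xᵢ*, xᵢ]` with `xᵢ² = 0` and `‖xᵢ‖ ≤ ‖h‖^{1/2}` (operator norms). -/
theorem stmt_7 (n : ℕ) (hn : 1 ≤ n) (h : Matrix (Fin n) (Fin n) ℂ)
    (hsa : IsSelfAdjoint h) (htr : h.trace = 0) :
    ∃ x₁ x₂ : Matrix (Fin n) (Fin n) ℂ,
      x₁ * x₁ = 0 ∧ x₂ * x₂ = 0 ∧
      ‖x₁‖ ≤ Real.sqrt ‖h‖ ∧ ‖x₂‖ ≤ Real.sqrt ‖h‖ ∧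
      (star x₁ * x₁ - x₁ * star x₁) * (star x₂ * x₂ - x₂ * star x₂) =
        (star x₂ * x₂ - x₂ * star x₂) * (star x₁ * x₁ - x₁ * star x₁) ∧
      h = (star x₁ * x₁ - x₁ * star x₁) + (star x₂ * x₂ - x₂ * star x₂) := by
  classical
  haveI : Nonempty (Fin n) := ⟨⟨0, hn⟩⟩
  have hH : h.IsHermitian := hsa
  set d : Fin n → ℝ := hH.eigenvalues with hd
  set M : ℝ := ‖h‖ with hMdef
  have hM : 0 ≤ M := norm_nonneg h
  -- eigenvalue bound
  have hb : ∀ i, |d i| ≤ M := by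
    intro i
    have h1 : d i ∈ spectrum ℝ h := hH.eigenvalues_mem_spectrum_real i
    have h2 : ((d i : ℝ) : ℂ) ∈ spectrum ℂ h := by
      rw [show ((d i : ℝ) : ℂ) = algebraMap ℝ ℂ (d i) from rfl]
      exact (spectrum.algebraMap_mem_iff ℂ).mpr h1
    have := spectrum.norm_le_norm_of_mem h2
    simpa using this
  -- trace zero
  have htrd : h.trace = ∑ i, (d i : ℂ) := by
    have hspec := hH.spectral_theorem
    rw [Unitary.conjStarAlgAut_apply] at hspec
    calc h.trace = ((hH.eigenvectorUnitary : Matrix (Fin n) (Fin n) ℂ) *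
          Matrix.diagonal (RCLike.ofReal ∘ d) *
          (star hH.eigenvectorUnitary : Matrix (Fin n) (Fin n) ℂ)).trace := by rw [← hspec]
      _ = ((star hH.eigenvectorUnitary : Matrix (Fin n) (Fin n) ℂ) *
          ((hH.eigenvectorUnitary : Matrix (Fin n) (Fin n) ℂ) *
          Matrix.diagonal (RCLike.ofReal ∘ d))).trace := by rw [Matrix.trace_mul_comm]
      _ = (Matrix.diagonal (RCLike.ofReal ∘ d)).trace := by
            rw [← mul_assoc, Unitary.coe_star_mul_self, one_mul]
      _ = ∑ i, (d i : ℂ) := by rw [Matrix.trace_diagonal]; rfl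
  have hsum : ∑ i, d i = 0 := by
    have : ((∑ i, d i : ℝ) : ℂ) = 0 := by
      push_cast
      rw [← htrd, htr]
    exact_mod_cast this
  -- rearrange so partial sums stay bounded
  obtain ⟨σ, hps⟩ := exists_perm_partial_sums n d M hM hb hsum
  set eN : ℕ → ℝ := fun k => if hk : k < n then d (σ ⟨k, hk⟩) else 0 with heN
  set t : ℕ → ℝ := fun m => ∑ k ∈ Finset.range m, eN k with ht
  have htb : ∀ m, |t m| ≤ M := hps
  have htn : t n = 0 := by
    have h1 : t n = ∑ i : Fin n, eN (i : ℕ) := (Fin.sum_univ_eq_sum_range eN n).symm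
    have h2 : ∀ i : Fin n, eN (i : ℕ) = d (σ i) := by
      intro i
      simp only [heN, i.isLt, dif_pos]
    rw [h1]
    rw [Finset.sum_congr rfl fun i _ => h2 i]
    rw [Equiv.sum_comp σ d]
    exact hsum
  have hstep : ∀ i : Fin n, t ((i : ℕ) + 1) = t (i : ℕ) + d (σ i) := by
    intro i
    simp only [ht, Finset.sum_range_succ]
    congr 1
    simp only [heN, i.isLt, dif_pos]
  -- the two pairings with paired values, on the permuted index set
  set vA : Fin n → ℝ := fun k => if (k : ℕ) % 2 = 0 then t ((k : ℕ) + 1) else -(t (k : ℕ))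
    with hvAdef
  set vB : Fin n → ℝ := fun k => if (k : ℕ) % 2 = 0 then -(t (k : ℕ)) else t ((k : ℕ) + 1)
    with hvBdef
  set pA : Fin n → Fin n := fun k => if (k : ℕ) % 2 = 0 then
      (if h2 : (k : ℕ) + 1 < n then ⟨(k : ℕ) + 1, h2⟩ else k)
    else ⟨(k : ℕ) - 1, lt_of_le_of_lt (Nat.sub_le _ _) k.isLt⟩ with hpAdef
  set pB : Fin n → Fin n := fun k => if (k : ℕ) % 2 = 0 then
      (if (k : ℕ) = 0 then k else ⟨(k : ℕ) - 1, lt_of_le_of_lt (Nat.sub_le _ _) k.isLt⟩)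
    else (if h2 : (k : ℕ) + 1 < n then ⟨(k : ℕ) + 1, h2⟩ else k) with hpBdef
  have hteq : ∀ i : Fin n, ¬((i : ℕ) + 1 < n) → t ((i : ℕ) + 1) = 0 := by
    intro i hi
    have : (i : ℕ) + 1 = n := by omega
    rw [this, htn]
  have hpA : ∀ i, pA (pA i) = i := by
    intro i
    by_cases h1 : (i : ℕ) % 2 = 0
    · by_cases h2 : (i : ℕ) + 1 < n
      · simp only [hpAdef, h1, if_pos, dif_pos h2]
        have : (((⟨(i : ℕ) + 1, h2⟩ : Fin n) : ℕ)) % 2 ≠ 0 := by simp; omega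
        simp only [if_neg this]
        exact Fin.ext (by simp)
      · simp only [hpAdef, h1, if_pos, dif_neg h2]
    · simp only [hpAdef, if_neg h1]
      have h3 : (((⟨(i : ℕ) - 1, lt_of_le_of_lt (Nat.sub_le _ _) i.isLt⟩ : Fin n) : ℕ)) % 2 = 0 := by
        simp; omega
      simp only [if_pos h3]
      have h4 : ((i : ℕ) - 1) + 1 < n := by
        have := i.isLt; omega
      rw [dif_pos]
      · exact Fin.ext (by simp only [Fin.val_mk]; omega)
      · simpa using h4
  have hpB : ∀ i, pB (pB i) = i := by
    intro i
    by_cases h1 : (i : ℕ) % 2 = 0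
    · by_cases h0 : (i : ℕ) = 0
      · simp only [hpBdef, h1, if_pos, h0, ite_true, if_pos h1]
      · simp only [hpBdef, h1, if_pos, if_neg h0]
        have h3 : (((⟨(i : ℕ) - 1, lt_of_le_of_lt (Nat.sub_le _ _) i.isLt⟩ : Fin n) : ℕ)) % 2 ≠ 0 := by
          simp; omega
        simp only [if_neg h3]
        have h4 : ((i : ℕ) - 1) + 1 < n := by have := i.isLt; omega
        rw [dif_pos]
        · exact Fin.ext (by simp only [Fin.val_mk]; omega)
        · simpa using h4
    · simp only [hpBdef, if_neg h1]
      by_cases h2 : (i : ℕ) + 1 < n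
      · rw [dif_pos h2]
        have h3 : (((⟨(i : ℕ) + 1, h2⟩ : Fin n) : ℕ)) % 2 = 0 := by simp; omega
        have h0 : (((⟨(i : ℕ) + 1, h2⟩ : Fin n) : ℕ)) ≠ 0 := by simp
        simp only [if_pos h3, if_neg h0]
        exact Fin.ext (by simp)
      · rw [dif_neg h2]
        simp only [if_neg h1, dif_neg h2]
  have hvA : ∀ i, vA (pA i) = -vA i := by
    intro i
    by_cases h1 : (i : ℕ) % 2 = 0
    · by_cases h2 : (i : ℕ) + 1 < n
      · simp only [hpAdef, hvAdef, h1, if_pos, dif_pos h2]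
        have : (((i : ℕ) + 1)) % 2 ≠ 0 := by omega
        simp [this, h1]
      · simp only [hpAdef, hvAdef, h1, if_pos, dif_neg h2]
        rw [hteq i h2]
        ring
    · simp only [hpAdef, hvAdef, if_neg h1]
      have h3 : ((i : ℕ) - 1) % 2 = 0 := by omega
      have h4 : (i : ℕ) - 1 + 1 = (i : ℕ) := by omega
      simp [h3, h4, h1]
  have hvB : ∀ i, vB (pB i) = -vB i := by
    intro i
    by_cases h1 : (i : ℕ) % 2 = 0
    · by_cases h0 : (i : ℕ) = 0
      · simp only [hpBdef, hvBdef, h1, if_pos, h0, ite_true]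
        simp [h0, h1, ht]
      · simp only [hpBdef, hvBdef, h1, if_pos, if_neg h0]
        have h3 : ((i : ℕ) - 1) % 2 ≠ 0 := by omega
        have h4 : (i : ℕ) - 1 + 1 = (i : ℕ) := by omega
        simp [h3, h4, h1]
    · simp only [hpBdef, hvBdef, if_neg h1]
      by_cases h2 : (i : ℕ) + 1 < n
      · rw [dif_pos h2]
        have h3 : (((i : ℕ) + 1)) % 2 = 0 := by omega
        simp [h3, h1]
      · rw [dif_neg h2]
        simp only [if_neg h1]
        rw [hteq i h2]
        ring
  have hvAb : ∀ i, |vA i| ≤ M := by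
    intro i
    simp only [hvAdef]
    split
    · exact htb _
    · rw [abs_neg]; exact htb _
  have hvBb : ∀ i, |vB i| ≤ M := by
    intro i
    simp only [hvBdef]
    split
    · rw [abs_neg]; exact htb _
    · exact htb _
  have hvsum : ∀ i, vA i + vB i = d (σ i) := by
    intro i
    have := hstep i
    simp only [hvAdef, hvBdef]
    split <;> linarith
  -- transport back through σ
  obtain ⟨y₁, hy₁sq, hy₁n, hy₁d⟩ := pair_matrix (fun i => σ (pA (σ.symm i)))
    (fun i => by simp [hpA]) (fun i => vA (σ.symm i)) (fun i => by simp [hvA]) hM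
    (fun i => hvAb _)
  obtain ⟨y₂, hy₂sq, hy₂n, hy₂d⟩ := pair_matrix (fun i => σ (pB (σ.symm i)))
    (fun i => by simp [hpB]) (fun i => vB (σ.symm i)) (fun i => by simp [hvB]) hM
    (fun i => hvBb _)
  -- conjugate by the eigenvector unitary
  set V : Matrix (Fin n) (Fin n) ℂ := (hH.eigenvectorUnitary : Matrix (Fin n) (Fin n) ℂ)
    with hV
  have hVmem : V ∈ unitary (Matrix (Fin n) (Fin n) ℂ) := hH.eigenvectorUnitary.prop
  have hV1 : star V * V = 1 := Unitary.star_mul_self_of_mem hVmem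
  have hV2 : V * star V = 1 := Unitary.mul_star_self_of_mem hVmem
  have hcan1 : ∀ z : Matrix (Fin n) (Fin n) ℂ, star V * (V * z) = z := fun z => by
    rw [← mul_assoc, hV1, one_mul]
  have hcan2 : ∀ z : Matrix (Fin n) (Fin n) ℂ, V * (star V * z) = z := fun z => by
    rw [← mul_assoc, hV2, one_mul]
  refine ⟨V * y₁ * star V, V * y₂ * star V, ?_, ?_, ?_, ?_, ?_, ?_⟩
  · calc V * y₁ * star V * (V * y₁ * star V) = V * (y₁ * y₁) * star V := by
          simp only [mul_assoc, hcan1]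
    _ = 0 := by rw [hy₁sq, mul_zero, zero_mul]
  · calc V * y₂ * star V * (V * y₂ * star V) = V * (y₂ * y₂) * star V := by
          simp only [mul_assoc, hcan1]
    _ = 0 := by rw [hy₂sq, mul_zero, zero_mul]
  · calc ‖V * y₁ * star V‖ = ‖y₁ * star V‖ := by
          rw [mul_assoc]; exact CStarRing.norm_mem_unitary_mul _ hVmem
    _ = ‖y₁‖ := CStarRing.norm_mul_mem_unitary _ (Unitary.star_mem hVmem)
    _ ≤ Real.sqrt M := hy₁n
  · calc ‖V * y₂ * star V‖ = ‖y₂ * star V‖ := by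
          rw [mul_assoc]; exact CStarRing.norm_mem_unitary_mul _ hVmem
    _ = ‖y₂‖ := CStarRing.norm_mul_mem_unitary _ (Unitary.star_mem hVmem)
    _ ≤ Real.sqrt M := hy₂n
  all_goals
    have hstar1 : star (V * y₁ * star V) = V * star y₁ * star V := by
      simp only [star_mul, star_star, mul_assoc]
  all_goals
    have hstar2 : star (V * y₂ * star V) = V * star y₂ * star V := by
      simp only [star_mul, star_star, mul_assoc]
  all_goals
    have hcomm1 : star (V * y₁ * star V) * (V * y₁ * star V) -
        (V * y₁ * star V) * star (V * y₁ * star V)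
        = V * Matrix.diagonal (fun i => ((vA (σ.symm i) : ℝ) : ℂ)) * star V := by
      rw [hstar1, ← hy₁d]
      simp only [mul_sub, sub_mul, mul_assoc, hcan1]
  all_goals
    have hcomm2 : star (V * y₂ * star V) * (V * y₂ * star V) -
        (V * y₂ * star V) * star (V * y₂ * star V)
        = V * Matrix.diagonal (fun i => ((vB (σ.symm i) : ℝ) : ℂ)) * star V := by
      rw [hstar2, ← hy₂d]
      simp only [mul_sub, sub_mul, mul_assoc, hcan1]
  · -- commutation
    rw [hcomm1, hcomm2]
    have hDD : Matrix.diagonal (fun i => ((vA (σ.symm i) : ℝ) : ℂ)) *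
        Matrix.diagonal (fun i => ((vB (σ.symm i) : ℝ) : ℂ))
        = Matrix.diagonal (fun i => ((vB (σ.symm i) : ℝ) : ℂ)) *
        Matrix.diagonal (fun i => ((vA (σ.symm i) : ℝ) : ℂ)) := by
      rw [Matrix.diagonal_mul_diagonal, Matrix.diagonal_mul_diagonal]
      have hfg : (fun i => ((vA (σ.symm i) : ℝ) : ℂ) * ((vB (σ.symm i) : ℝ) : ℂ))
          = (fun i => ((vB (σ.symm i) : ℝ) : ℂ) * ((vA (σ.symm i) : ℝ) : ℂ)) :=
        funext fun i => mul_comm _ _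
      rw [hfg]
    calc V * Matrix.diagonal (fun i => ((vA (σ.symm i) : ℝ) : ℂ)) * star V *
          (V * Matrix.diagonal (fun i => ((vB (σ.symm i) : ℝ) : ℂ)) * star V)
        = V * (Matrix.diagonal (fun i => ((vA (σ.symm i) : ℝ) : ℂ)) *
          Matrix.diagonal (fun i => ((vB (σ.symm i) : ℝ) : ℂ))) * star V := by
          simp only [mul_assoc, hcan1]
      _ = V * (Matrix.diagonal (fun i => ((vB (σ.symm i) : ℝ) : ℂ)) *
          Matrix.diagonal (fun i => ((vA (σ.symm i) : ℝ) : ℂ))) * star V := by rw [hDD]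
      _ = V * Matrix.diagonal (fun i => ((vB (σ.symm i) : ℝ) : ℂ)) * star V *
          (V * Matrix.diagonal (fun i => ((vA (σ.symm i) : ℝ) : ℂ)) * star V) := by
          simp only [mul_assoc, hcan1]
  · -- sum
    rw [hcomm1, hcomm2, ← add_mul, ← mul_add, Matrix.diagonal_add]
    have hdiag : (fun i => ((vA (σ.symm i) : ℝ) : ℂ) + ((vB (σ.symm i) : ℝ) : ℂ))
        = RCLike.ofReal ∘ d := by
      funext i
      have := hvsum (σ.symm i)
      rw [← Complex.ofReal_add, this, Equiv.apply_symm_apply]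
      rfl
    rw [hdiag]
    exact hH.spectral_theorem
end

section
/- Let λ₁, …, λₙ be real numbers with λ₁ + ⋯ + λₙ = 0. Then there exists a permutation σ of {1, …, n} such that for every k with 1 ≤ k ≤ n one has |∑_{i=1}^{k} λ_{σ(i)}| ≤ max_{1 ≤ i ≤ k} |λ_{σ(i)}|. -/
lemma iic_succ_eq (n : ℕ) (m : Fin n) :
    (Finset.Iic m.succ : Finset (Fin (n+1))) = insert 0 ((Finset.Iic m).map (Fin.succEmb n)) := by
  ext x
  induction x using Fin.cases with
  | zero => simp [Fin.zero_le]
  | succ i => simp [Fin.succ_le_succ_iff, Fin.succ_ne_zero]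

lemma aux_rearrange : ∀ (n : ℕ) (s : ℝ) (lam : Fin n → ℝ), s + ∑ i, lam i = 0 →
    ∃ σ : Equiv.Perm (Fin n), ∀ k : Fin n,
      |s + ∑ i ∈ Finset.Iic k, lam (σ i)| ≤
        max |s| ((Finset.Iic k).sup' Finset.nonempty_Iic (fun i => |lam (σ i)|)) := by
  intro n
  induction n with
  | zero => exact fun s lam _ => ⟨Equiv.refl _, fun k => k.elim0⟩
  | succ n ih =>
    intro s lam hsum
    -- choose j with opposite sign
    have hj : ∃ j : Fin (n+1), (0 ≤ s ∧ lam j ≤ 0) ∨ (s < 0 ∧ 0 ≤ lam j) := by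
      rcases le_or_gt 0 s with hs | hs
      · have hex : ∃ j, lam j ≤ 0 := by
          by_contra h
          push_neg at h
          have : 0 < ∑ i, lam i := Finset.sum_pos (fun i _ => h i) Finset.univ_nonempty
          linarith
        obtain ⟨j, hj⟩ := hex
        exact ⟨j, Or.inl ⟨hs, hj⟩⟩
      · have hex : ∃ j, 0 ≤ lam j := by
          by_contra h
          push_neg at h
          have : ∑ i, lam i < 0 := Finset.sum_neg (fun i _ => h i) Finset.univ_nonempty
          linarith
        obtain ⟨j, hj⟩ := hex
        exact ⟨j, Or.inr ⟨hs, hj⟩⟩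
    obtain ⟨j, hj⟩ := hj
    have hkey : |s + lam j| ≤ max |s| |lam j| := by
      rcases hj with ⟨hs, hl⟩ | ⟨hs, hl⟩
      · rw [abs_le]
        constructor
        · have : -|lam j| ≤ lam j := neg_abs_le _
          have h2 : -(max |s| |lam j|) ≤ -|lam j| := by
            simp [le_max_iff]
          linarith
        · have : s ≤ |s| := le_abs_self s
          have h2 : |s| ≤ max |s| |lam j| := le_max_left _ _
          linarith
      · rw [abs_le]
        constructor
        · have : -|s| ≤ s := neg_abs_le _
          have h2 : -(max |s| |lam j|) ≤ -|s| := by simp [le_max_iff]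
          linarith
        · have : lam j ≤ |lam j| := le_abs_self _
          have h2 : |lam j| ≤ max |s| |lam j| := le_max_right _ _
          linarith
    set lam' : Fin n → ℝ := fun i => lam ((Equiv.swap 0 j) i.succ) with hlam'
    have hsum' : (s + lam j) + ∑ i, lam' i = 0 := by
      have h1 : ∑ x : Fin (n+1), lam ((Equiv.swap 0 j) x) = ∑ x, lam x :=
        Equiv.sum_comp (Equiv.swap 0 j) lam
      rw [Fin.sum_univ_succ] at h1
      simp only [Equiv.swap_apply_left] at h1
      have : ∑ i : Fin n, lam' i = ∑ i, lam i - lam j := by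
        rw [hlam', ← h1]; ring
      rw [this]; linarith
    obtain ⟨σ', hσ'⟩ := ih (s + lam j) lam' hsum'
    refine ⟨Equiv.Perm.decomposeFin.symm (j, σ'), ?_⟩
    intro k
    induction k using Fin.cases with
    | zero =>
      have hz : (Finset.Iic (0 : Fin (n+1))) = {0} := by
        ext x; simp [Fin.le_zero_iff]
      rw [show ((Finset.Iic (0 : Fin (n+1))).sup' Finset.nonempty_Iic
            (fun i => |lam ((Equiv.Perm.decomposeFin.symm (j, σ')) i)|)) =
          ({0} : Finset (Fin (n+1))).sup' (by simp)
            (fun i => |lam ((Equiv.Perm.decomposeFin.symm (j, σ')) i)|) from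
          Finset.sup'_congr _ hz (fun a _ => rfl), hz,
        Finset.sum_singleton, Finset.sup'_singleton,
        Equiv.Perm.decomposeFin_symm_apply_zero]
      exact hkey
    | succ m =>
      have h0 : (0 : Fin (n+1)) ∉ (Finset.Iic m).map (Fin.succEmb n) := by
        simp [Fin.succ_ne_zero, Fin.ext_iff]
      have hmapne : ((Finset.Iic m).map (Fin.succEmb n)).Nonempty := by
        simp [Finset.map_nonempty]
      have happ : ∀ i : Fin n,
          lam ((Equiv.Perm.decomposeFin.symm (j, σ')) i.succ) = lam' (σ' i) := by
        intro i
        rw [Equiv.Perm.decomposeFin_symm_apply_succ]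
      have hsum_eq : ∑ i ∈ Finset.Iic m.succ, lam ((Equiv.Perm.decomposeFin.symm (j, σ')) i) =
          lam j + ∑ i ∈ Finset.Iic m, lam' (σ' i) := by
        rw [iic_succ_eq, Finset.sum_insert h0, Finset.sum_map,
          Equiv.Perm.decomposeFin_symm_apply_zero]
        congr 1
        exact Finset.sum_congr rfl (fun i _ => happ i)
      have hsup_eq : (Finset.Iic m.succ).sup' Finset.nonempty_Iic
            (fun i => |lam ((Equiv.Perm.decomposeFin.symm (j, σ')) i)|) =
          max |lam j| ((Finset.Iic m).sup' Finset.nonempty_Iic (fun i => |lam' (σ' i)|)) := by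
        rw [show ((Finset.Iic m.succ).sup' Finset.nonempty_Iic
              (fun i => |lam ((Equiv.Perm.decomposeFin.symm (j, σ')) i)|)) =
            (insert (0 : Fin (n+1)) ((Finset.Iic m).map (Fin.succEmb n))).sup'
              (Finset.insert_nonempty _ _)
              (fun i => |lam ((Equiv.Perm.decomposeFin.symm (j, σ')) i)|) from
            Finset.sup'_congr _ (iic_succ_eq n m) (fun a _ => rfl)]
        rw [Finset.sup'_insert hmapne]
        congr 1
        · rw [Equiv.Perm.decomposeFin_symm_apply_zero]
        · rw [Finset.sup'_map]
          exact Finset.sup'_congr _ rfl (fun i _ => congrArg abs (happ i))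
      rw [hsum_eq, hsup_eq, ← add_assoc]
      calc |s + lam j + ∑ i ∈ Finset.Iic m, lam' (σ' i)|
          ≤ max |s + lam j| ((Finset.Iic m).sup' Finset.nonempty_Iic (fun i => |lam' (σ' i)|)) :=
            hσ' m
        _ ≤ max (max |s| |lam j|) ((Finset.Iic m).sup' Finset.nonempty_Iic (fun i => |lam' (σ' i)|)) :=
            max_le_max hkey le_rfl
        _ = max |s| (max |lam j| ((Finset.Iic m).sup' Finset.nonempty_Iic (fun i => |lam' (σ' i)|))) :=
            max_assoc _ _ _

/-- Rearrangement lemma: real numbers summing to zero can be permuted so that every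
partial sum is bounded by the maximum modulus of the terms appearing in it. -/
theorem stmt_8 (n : ℕ) (lam : Fin n → ℝ) (hsum : ∑ i, lam i = 0) :
    ∃ σ : Equiv.Perm (Fin n), ∀ k : Fin n,
      |∑ i ∈ Finset.Iic k, lam (σ i)| ≤
        (Finset.Iic k).sup' Finset.nonempty_Iic (fun i => |lam (σ i)|) := by
  obtain ⟨σ, hσ⟩ := aux_rearrange n 0 lam (by simpa using hsum)
  refine ⟨σ, fun k => ?_⟩
  have := hσ k
  simp only [zero_add, abs_zero] at this
  have hnn : (0:ℝ) ≤ (Finset.Iic k).sup' Finset.nonempty_Iic (fun i => |lam (σ i)|) :=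
    le_trans (abs_nonneg (lam (σ k)))
      (Finset.le_sup' (fun i => |lam (σ i)|) (Finset.mem_Iic.2 (le_refl k)))
  rwa [max_eq_right hnn] at this
end

section
/- Let G be a group, let k ≥ 1 and m ≥ 0, and let a_{j,l} ∈ G for 1 ≤ j ≤ k and 0 ≤ l ≤ m. Set N = ⌊(m+1)/2⌋ · (k−1). Then there exist u₁, v₁, …, u_N, v_N ∈ G such that ∏_{j=1}^{k} ∏_{l=0}^{m} a_{j,l} = P₀ P₁ ⋯ P_m · ∏_{i=1}^{N} u_i v_i u_i⁻¹ v_i⁻¹, where for even l the factor P_l is the forward product a_{1,l} a_{2,l} ⋯ a_{k,l} and for odd l the factor P_l is the reversed product a_{k,l} a_{k−1,l} ⋯ a_{1,l}. -/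
namespace Stmt10Aux

variable {G : Type*} [Group G]

def snake : Bool → List G → List G → List G
  | fl, a :: A, b :: B => (if fl then b * a else a * b) :: snake (!fl) A B
  | _, _, _ => []

def comms (L : List (G × G)) : G :=
  (L.map fun p => p.1 * p.2 * p.1⁻¹ * p.2⁻¹).prod

def colL (n : ℕ) : List (List G) → List G
  | [] => List.replicate n 1
  | r :: rs => snake false r (colL n rs)

theorem comms_append (L1 L2 : List (G × G)) : comms (L1 ++ L2) = comms L1 * comms L2 := by
  simp [comms]

theorem snake_length : ∀ (fl : Bool) (A B : List G),
    (snake fl A B).length = min A.length B.length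
  | fl, a :: A, b :: B => by
    simp [snake, snake_length (!fl) A B]
  | _, [], _ => by simp [snake]
  | _, _ :: _, [] => by simp [snake]

theorem snake_replicate_prod : ∀ (fl : Bool) (A : List G),
    (snake fl A (List.replicate A.length 1)).prod = A.prod
  | fl, [] => by simp [snake]
  | fl, a :: A => by
    cases fl <;>
      simp [snake, List.replicate_succ, snake_replicate_prod _ A]

theorem merge : ∀ (A B : List G), A.length = B.length →
    ∃ L : List (G × G), L.length = A.length / 2 ∧
      A.prod * B.prod = (snake false A B).prod * comms L
  | [], [], _ => ⟨[], by simp [snake, comms]⟩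
  | [a], [b], _ => ⟨[], by simp [snake, comms]⟩
  | [], _ :: _, h => by simp at h
  | _ :: _, [], h => by simp at h
  | [a], _ :: _ :: _, h => by simp at h
  | _ :: _ :: _, [b], h => by simp at h
  | a :: a' :: A, b :: b' :: B, h => by
    obtain ⟨L, hL, hE⟩ := merge A B (by simpa using h)
    refine ⟨L ++ [(B.prod⁻¹ * (a' * A.prod)⁻¹ * B.prod,
        B.prod⁻¹ * (b * b')⁻¹ * B.prod)], ?_, ?_⟩
    · simp [hL]; omega
    · have hS : (snake false A B).prod = (A.prod * B.prod) * (comms L)⁻¹ := by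
        rw [hE]; group
    -- snake false (a::a'::A) (b::b'::B) = (a*b) :: (b'*a') :: snake false A B
      show (a :: a' :: A).prod * (b :: b' :: B).prod =
        ((a * b) :: (b' * a') :: snake false A B).prod * _
      rw [comms_append]
      simp only [List.prod_cons, hS, comms, List.map_cons, List.map_nil, List.prod_nil]
      group

theorem colL_length : ∀ (rows : List (List G)) (n : ℕ),
    (∀ r ∈ rows, r.length = n) → (colL n rows).length = n
  | [], n, _ => by simp [colL]
  | r :: rs, n, h => by
    have h1 : r.length = n := h r (by simp)
    have h2 := colL_length rs n (fun r hr => h r (by simp [hr]))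
    simp [colL, snake_length, h1, h2]

theorem top : ∀ (rows : List (List G)) (n : ℕ), (∀ r ∈ rows, r.length = n) →
    ∃ L : List (G × G), L.length = n / 2 * (rows.length - 1) ∧
      (rows.map List.prod).prod = (colL n rows).prod * comms L
  | [], n, _ => ⟨[], by simp [colL, comms]⟩
  | [r], n, h => by
    refine ⟨[], by simp, ?_⟩
    have h1 : r.length = n := h r (by simp)
    subst h1
    simp [colL, comms, snake_replicate_prod]
  | r :: r' :: rs, n, h => by
    obtain ⟨L', hL', hE'⟩ := top (r' :: rs) n (fun s hs => h s (by simp at hs ⊢; tauto))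
    have hcl : (colL n (r' :: rs)).length = n :=
      colL_length _ n (fun s hs => h s (by simp at hs ⊢; tauto))
    obtain ⟨LM, hLM, hEM⟩ := merge r (colL n (r' :: rs)) (by rw [hcl, h r (by simp)])
    refine ⟨LM ++ L', ?_, ?_⟩
    · simp [hLM, hL', h r (by simp)]
      ring
    · rw [comms_append]
      show _ = (snake false r (colL n (r' :: rs))).prod * _
      rw [List.map_cons, List.prod_cons, hE', ← mul_assoc, hEM]
      group

theorem snake_ofFn : ∀ (n : ℕ) (fl : Bool) (f g : Fin n → G),
    snake fl (List.ofFn f) (List.ofFn g) =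
      List.ofFn (fun l => if Even ((l : ℕ) + cond fl 1 0) then f l * g l else g l * f l) := by
  intro n
  induction n with
  | zero => intro fl f g; simp [snake]
  | succ n ih =>
    intro fl f g
    rw [List.ofFn_succ, List.ofFn_succ, List.ofFn_succ]
    show (if fl then g 0 * f 0 else f 0 * g 0) :: snake (!fl) _ _ = _
    rw [ih]
    cases fl <;> rw [List.cons_eq_cons] <;>
      refine ⟨by simp [Nat.even_add_one], ?_⟩ <;>
      · rw [List.ofFn_inj]
        funext l
        simp [Nat.even_add_one, Fin.val_succ]

theorem colL_ofFn : ∀ (k n : ℕ) (a : Fin k → Fin n → G),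
    colL n (List.ofFn fun j => List.ofFn fun l => a j l) =
      List.ofFn (fun l : Fin n => if Even (l : ℕ)
        then (List.ofFn fun j => a j l).prod
        else ((List.ofFn fun j => a j l).reverse).prod)
  | 0, n, a => by
    simp [colL, List.ofFn_zero]
  | k + 1, n, a => by
    rw [List.ofFn_succ]
    show snake false (List.ofFn fun l => a 0 l) _ = _
    rw [colL_ofFn k n (fun j l => a j.succ l), snake_ofFn]
    rw [List.ofFn_inj]
    funext l
    by_cases hl : Even (l : ℕ) <;>
      simp [hl, List.ofFn_succ, Nat.even_add_one]

end Stmt10Aux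

/-- Extension of Lemma 3.5: a product `∏_{j=1}^{k} ∏_{l=0}^{m} a_{j,l}` equals the product
of the column products `P₀ P₁ ⋯ P_m` (forward for even `l`, reversed for odd `l`) times
`⌊(m+1)/2⌋ (k-1)` multiplicative commutators. -/
theorem stmt_10 {G : Type*} [Group G] (k m : ℕ) (hk : 1 ≤ k)
    (a : Fin k → Fin (m + 1) → G) :
    ∃ u v : Fin ((m + 1) / 2 * (k - 1)) → G,
      (List.ofFn fun j => (List.ofFn fun l => a j l).prod).prod =
        (List.ofFn fun l : Fin (m + 1) =>
            if Even (l : ℕ) then (List.ofFn fun j => a j l).prod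
            else ((List.ofFn fun j => a j l).reverse).prod).prod *
          (List.ofFn fun i => u i * v i * (u i)⁻¹ * (v i)⁻¹).prod := by
  obtain ⟨L, hlen, heq⟩ := Stmt10Aux.top
    (List.ofFn fun j : Fin k => List.ofFn fun l : Fin (m + 1) => a j l) (m + 1)
    (by
      intro r hr
      rw [List.mem_ofFn] at hr
      obtain ⟨j, rfl⟩ := hr
      simp)
  rw [Stmt10Aux.colL_ofFn] at heq
  simp only [List.length_ofFn] at hlen
  refine ⟨fun i => (L.get (Fin.cast hlen.symm i)).1,
    fun i => (L.get (Fin.cast hlen.symm i)).2, ?_⟩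
  have h1 : (List.ofFn fun j : Fin k => (List.ofFn fun l => a j l).prod) =
      (List.ofFn fun j : Fin k => List.ofFn fun l : Fin (m + 1) => a j l).map List.prod := by
    rw [List.map_ofFn]; rfl
  have h2 : (List.ofFn fun i : Fin ((m + 1) / 2 * (k - 1)) =>
      (L.get (Fin.cast hlen.symm i)).1 * (L.get (Fin.cast hlen.symm i)).2 *
        ((L.get (Fin.cast hlen.symm i)).1)⁻¹ * ((L.get (Fin.cast hlen.symm i)).2)⁻¹) =
      L.map fun p => p.1 * p.2 * p.1⁻¹ * p.2⁻¹ := by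
    apply List.ext_getElem
    · simp [hlen]
    · intro i hi1 hi2
      simp
  rw [h1, heq, h2]
  rfl
end

section
/- Let F be a finite-dimensional C*-algebra and let h ∈ F be selfadjoint. Then there exist selfadjoint q, r ∈ F such that h = q + r, q lies in the linear span of the commutators {xy − yx : x, y ∈ F}, r lies in the center of F, ‖q‖ ≤ 2‖h‖, and ‖r‖ ≤ ‖h‖. -/
open MeasureTheory NormedSpace ComplexStarModule in
/-- Lemma 3.4: in a finite-dimensional C*-algebra, every selfadjoint `h` decomposes as
`h = q + r` with `q` a sum of commutators, `r` central, `‖q‖ ≤ 2‖h‖` and `‖r‖ ≤ ‖h‖`. -/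
theorem stmt_11 {F : Type*} [NormedRing F] [StarRing F] [CStarRing F]
    [NormedAlgebra ℂ F] [StarModule ℂ F] [FiniteDimensional ℂ F]
    (h : F) (hsa : IsSelfAdjoint h) :
    ∃ q r : F, IsSelfAdjoint q ∧ IsSelfAdjoint r ∧ h = q + r ∧
      q ∈ Submodule.span ℂ {z : F | ∃ x y : F, z = x * y - y * x} ∧
      r ∈ Set.center F ∧ ‖q‖ ≤ 2 * ‖h‖ ∧ ‖r‖ ≤ ‖h‖ := by
  rcases subsingleton_or_nontrivial F with hF | hF
  · exact ⟨0, 0, (IsSelfAdjoint.zero F), (IsSelfAdjoint.zero F), Subsingleton.elim _ _,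
      Submodule.zero_mem _, Set.zero_mem_center, by simp [Subsingleton.elim h 0],
      by simp [Subsingleton.elim h 0]⟩
  set W : Submodule ℂ F := Submodule.span ℂ {z : F | ∃ x y : F, z = x * y - y * x} with hW
  -- instances on the unitary group
  haveI : IsTopologicalGroup (unitary F) :=
    { continuous_mul := continuous_mul
      continuous_inv := continuous_induced_rng.2 (by
        simpa [← Unitary.star_eq_inv, Function.comp_def] using (continuous_star.comp continuous_subtype_val :
          Continuous fun u : unitary F => star (u : F))) }
  haveI : CompactSpace (unitary F) := by
    have hc : IsCompact ((unitary F : Set F)) := by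
      apply Metric.isCompact_of_isClosed_isBounded
      · exact IsClosed.inter
          (isClosed_eq (continuous_star.mul continuous_id) continuous_const)
          (isClosed_eq (continuous_id.mul continuous_star) continuous_const)
      · apply Bornology.IsBounded.subset (Metric.isBounded_closedBall (x := (0:F)) (r := 1))
        rintro x hx
        simp only [Metric.mem_closedBall, dist_zero_right]
        exact le_of_eq (CStarRing.norm_coe_unitary ⟨x, hx⟩)
    exact isCompact_iff_compactSpace.mp hc
  letI : MeasurableSpace (unitary F) := borel _
  haveI : BorelSpace (unitary F) := ⟨rfl⟩
  set μ : Measure (unitary F) :=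
    Measure.haarMeasure (⊤ : TopologicalSpace.PositiveCompacts (unitary F)) with hμ
  haveI : IsProbabilityMeasure μ := ⟨by
    rw [← TopologicalSpace.PositiveCompacts.coe_top (α := unitary F)]
    exact Measure.haarMeasure_self⟩
  -- the integrand
  set f : unitary F → F := fun u => (u : F) * h * star (u : F) with hf
  have hf_cont : Continuous f := by
    apply Continuous.mul
    · exact continuous_subtype_val.mul continuous_const
    · exact continuous_star.comp continuous_subtype_val
  have hf_int : Integrable f μ :=
    hf_cont.integrable_of_hasCompactSupport
      (IsCompact.of_isClosed_subset isCompact_univ (isClosed_tsupport f) (Set.subset_univ _))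
  set r : F := ∫ u, f u ∂μ with hr
  -- norm of each value
  have hfnorm : ∀ u : unitary F, ‖f u‖ = ‖h‖ := by
    intro u
    rw [hf]
    calc ‖(u : F) * h * star (u : F)‖ = ‖(u : F) * (h * ((star u : unitary F) : F))‖ := by
          rw [mul_assoc]; rfl
      _ = ‖h * ((star u : unitary F) : F)‖ := CStarRing.norm_coe_unitary_mul _ _
      _ = ‖h‖ := CStarRing.norm_mul_coe_unitary _ _
  -- invariance under conjugation
  have hinv : ∀ v : unitary F, (v : F) * r * star (v : F) = r := by
    intro v
    have key : ∫ u, f (v * u) ∂μ = r := by rw [integral_mul_left_eq_self f v]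
    have hfvu : ∀ u : unitary F, f (v * u) = (v : F) * f u * star (v : F) := by
      intro u
      simp only [hf, Submonoid.coe_mul, star_mul, Subgroup.coe_mul]
      noncomm_ring
    set L : F →L[ℂ] F :=
      ((ContinuousLinearMap.mul ℂ F (v : F)).comp
        ((ContinuousLinearMap.mul ℂ F).flip (star (v : F)))) with hL
    have hLx : ∀ x : F, L x = (v : F) * x * star (v : F) := by
      intro x
      simp [hL, mul_assoc]
    calc (v : F) * r * star (v : F) = L r := (hLx r).symm
      _ = ∫ u, L (f u) ∂μ := (L.integral_comp_comm hf_int).symm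
      _ = ∫ u, f (v * u) ∂μ := by
          congr 1; ext u; rw [hLx, hfvu]
      _ = r := key
  have hcomm : ∀ v : unitary F, (v : F) * r = r * (v : F) := by
    intro v
    have := congrArg (fun x => x * (v : F)) (hinv v)
    simpa [mul_assoc, Unitary.coe_star_mul_self v] using this
  -- r is selfadjoint
  have hrsa : IsSelfAdjoint r := by
    have : star r = ∫ u, star (f u) ∂μ := by
      have := (((starL' ℝ : F ≃L[ℝ] F) : F →L[ℝ] F).integral_comp_comm hf_int).symm
      simpa using this
    rw [IsSelfAdjoint, this]
    congr 1; ext u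
    simp only [hf, star_mul, star_star, hsa.star_eq, mul_assoc]
  -- r is central
  have hcentral : r ∈ Set.center F := by
    rw [Semigroup.mem_center_iff]
    -- first: r commutes with every selfadjoint b
    have hsacomm : ∀ b : F, IsSelfAdjoint b → b * r = r * b := by
      intro b hb
      set x : F := Complex.I • b with hx
      have hφ : ∀ t : ℝ, exp (t • x) * r = r * exp (t • x) := by
        intro t
        have h1 : exp (t • x) = ((selfAdjoint.expUnitary (t • ⟨b, hb⟩) : unitary F) : F) := by
          rw [selfAdjoint.expUnitary_coe]
          congr 1
          show t • x = Complex.I • (t • b)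
          rw [hx, smul_comm]
        rw [h1, ← hcomm (selfAdjoint.expUnitary (t • ⟨b, hb⟩))]
      have d1 : HasDerivAt (fun t : ℝ => exp (t • x) * r) (x * r) 0 := by
        have := (hasDerivAt_exp_smul_const (𝕂 := ℝ) x 0).mul_const r
        simpa using this
      have d2 : HasDerivAt (fun t : ℝ => exp (t • x) * r) (r * x) 0 := by
        have := (hasDerivAt_exp_smul_const (𝕂 := ℝ) x 0).const_mul r
        simp only [zero_smul, exp_zero, mul_one, one_mul] at this
        simpa only [← hφ] using this
      have hxr : x * r = r * x := d1.unique d2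
      have : Complex.I • (b * r) = Complex.I • (r * b) := by
        simpa [hx, smul_mul_assoc, mul_smul_comm] using hxr
      exact smul_right_injective F Complex.I_ne_zero this
    intro g
    have h1 : (ℜ g : F) * r = r * ℜ g := hsacomm _ (ℜ g).2
    have h2 : (ℑ g : F) * r = r * ℑ g := hsacomm _ (ℑ g).2
    calc g * r = ((ℜ g : F) + Complex.I • (ℑ g : F)) * r := by
          rw [realPart_add_I_smul_imaginaryPart]
      _ = r * ((ℜ g : F) + Complex.I • (ℑ g : F)) := by
          rw [add_mul, mul_add, h1, smul_mul_assoc, mul_smul_comm, h2]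
      _ = r * g := by rw [realPart_add_I_smul_imaginaryPart]
  -- h - r lies in the span of commutators
  have hqW : h - r ∈ W := by
    have hsub : h - r = ∫ u, (h - f u) ∂μ := by
      rw [integral_sub (integrable_const h) hf_int, integral_const, probReal_univ,
        one_smul, hr]
    rw [hsub]
    apply Convex.integral_mem ((W.restrictScalars ℝ).convex) (W.closed_of_finiteDimensional)
    · filter_upwards with u
      have : f u - h ∈ W := by
        apply Submodule.subset_span
        exact ⟨(u : F) * h, star (u : F), by
          rw [hf]
          congr 1
          rw [← mul_assoc, Unitary.coe_star_mul_self, one_mul]⟩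
      simpa using W.neg_mem this
    · exact (integrable_const h).sub hf_int
  -- norm bound on r
  have hrnorm : ‖r‖ ≤ ‖h‖ := by
    have := norm_integral_le_of_norm_le_const (μ := μ) (f := f) (C := ‖h‖)
      (Filter.Eventually.of_forall fun u => (hfnorm u).le)
    simpa [measure_univ] using this
  refine ⟨h - r, r, hsa.sub hrsa, hrsa, (sub_add_cancel h r).symm, hqW, hcentral, ?_, hrnorm⟩
  calc ‖h - r‖ ≤ ‖h‖ + ‖r‖ := norm_sub_le _ _
    _ ≤ ‖h‖ + ‖h‖ := by linarith
    _ = 2 * ‖h‖ := by ring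
end
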